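/- Fix d ≥ 1 and a word α ∈ F_d of length m. Then there exist n×n complex matrices Z_1,…,Z_d with n = m + 1, forming a strict row contraction (‖Z_1Z_1* + … + Z_dZ_d*‖ < 1) and jointly nilpotent in the sense that Z^β = 0 for every word β of length > m, together with vectors y, v ∈ ℂⁿ, such that for every word β ∈ F_d one has ⟨y, Z^β v⟩ = 1 if β = α and ⟨y, Z^β v⟩ = 0 if β ≠ α. -/

import Mathlib

instance (d : ℕ) : DecidableEq (FreeMonoid (Fin d)) :=
  fun a b => decidable_of_iff _ (FreeMonoid.toList.apply_eq_iff_eq (x := a) (y := b))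

noncomputable section

set_option synthInstance.maxHeartbeats 1000000
set_option maxHeartbeats 1000000

namespace S8

open ContinuousLinearMap

variable {d : ℕ} (l : List (Fin d))

def E (p : Fin (l.length + 1)) : EuclideanSpace ℂ (Fin (l.length + 1)) :=
  EuclideanSpace.single p 1

def eps : ℝ := ((d * (l.length + 1) : ℕ) : ℝ)⁻¹

lemma eps_nonneg : 0 ≤ eps l := inv_nonneg.mpr (Nat.cast_nonneg _)

def Z (j : Fin d) :
    EuclideanSpace ℂ (Fin (l.length + 1)) →L[ℂ] EuclideanSpace ℂ (Fin (l.length + 1)) :=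
  ∑ k : Fin l.length,
    if l[l.length - 1 - (k : ℕ)]? = some j then
      (eps l : ℂ) • ((innerSL ℂ (E l k.castSucc)).smulRight (E l k.succ)) else 0

lemma Z_single (j : Fin d) (p : ℕ) (hp : p ≤ l.length) :
    Z l j (E l ⟨p, by omega⟩) =
      if h : p < l.length ∧ l[l.length - 1 - p]? = some j then
        (eps l : ℂ) • E l ⟨p + 1, Nat.succ_lt_succ h.1⟩ else 0 := by
  classical
  have hterm : ∀ k : Fin l.length,
      (if l[l.length - 1 - (k : ℕ)]? = some j then
        (eps l : ℂ) • ((innerSL ℂ (E l k.castSucc)).smulRight (E l k.succ)) else 0)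
        (E l ⟨p, by omega⟩) =
      if ((k : ℕ) = p ∧ l[l.length - 1 - (k : ℕ)]? = some j) then
        (eps l : ℂ) • E l ⟨(k : ℕ) + 1, by omega⟩ else 0 := by
    intro k
    by_cases hk : (k : ℕ) = p
    · by_cases hc : l[l.length - 1 - (k : ℕ)]? = some j
      · rw [if_pos hc, if_pos ⟨hk, hc⟩]
        simp only [smul_apply, smulRight_apply, innerSL_apply_apply, E,
          EuclideanSpace.inner_single_left, map_one, one_mul]
        rw [EuclideanSpace.single_apply, if_pos (by ext; simp [hk]), Fin.succ_mk]
        simp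
      · rw [if_neg hc, if_neg (fun h => hc h.2)]; rfl
    · by_cases hc : l[l.length - 1 - (k : ℕ)]? = some j
      · rw [if_pos hc, if_neg (fun h => hk h.1)]
        simp only [smul_apply, smulRight_apply, innerSL_apply_apply, E,
          EuclideanSpace.inner_single_left, map_one, one_mul]
        rw [EuclideanSpace.single_apply, if_neg (by simp [Fin.ext_iff]; omega)]
        simp
      · rw [if_neg hc, if_neg (fun h => hc h.2)]; rfl
  rw [Z, ContinuousLinearMap.sum_apply]
  rw [Finset.sum_congr rfl fun k _ => hterm k]
  by_cases hplt : p < l.length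
  · rw [Finset.sum_eq_single (⟨p, hplt⟩ : Fin l.length)]
    · by_cases hc : l[l.length - 1 - p]? = some j
      · rw [if_pos ⟨rfl, hc⟩, dif_pos ⟨hplt, hc⟩]
      · rw [if_neg (fun h => hc h.2), dif_neg (fun h => hc h.2)]
    · intro k _ hk
      exact if_neg (fun h => hk (Fin.ext h.1))
    · intro h; exact absurd (Finset.mem_univ _) h
  · rw [dif_neg (fun h => hplt h.1)]
    apply Finset.sum_eq_zero
    intro k _
    rw [if_neg]
    rintro ⟨h1, -⟩
    omega

lemma prod_single (b : List (Fin d)) (q : ℕ) (hq : q ≤ l.length) :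
    (b.map (Z l)).prod (E l ⟨q, Nat.lt_succ_of_le hq⟩) =
      if h : q + b.length ≤ l.length then
        (if ∀ i < b.length, b[i]? = l[l.length - q - b.length + i]? then
          ((eps l : ℂ) ^ b.length) • E l ⟨q + b.length, Nat.lt_succ_of_le h⟩ else 0)
      else 0 := by
  classical
  induction b generalizing q with
  | nil =>
    simp only [List.map_nil, List.prod_nil, ContinuousLinearMap.one_apply, List.length_nil, Nat.add_zero]
    rw [dif_pos hq, if_pos (fun i hi => absurd hi (Nat.not_lt_zero i)), pow_zero, one_smul]
  | cons j t ih =>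
    simp only [List.map_cons, List.prod_cons, ContinuousLinearMap.mul_apply, List.length_cons]
    rw [ih q hq]
    by_cases h1 : q + t.length ≤ l.length
    · rw [dif_pos h1]
      by_cases h2 : ∀ i < t.length, t[i]? = l[l.length - q - t.length + i]?
      · rw [if_pos h2, map_smul]
        rw [Z_single l j (q + t.length) h1]
        by_cases h3 : q + t.length < l.length
        · by_cases h4 : l[l.length - 1 - (q + t.length)]? = some j
          · rw [dif_pos ⟨h3, h4⟩, dif_pos (by omega), if_pos, smul_smul, ← pow_succ]
            · rfl
            · intro i hi
              match i with
              | 0 =>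
                simp only [List.getElem?_cons_zero]
                rw [show l.length - q - (t.length + 1) + 0 = l.length - 1 - (q + t.length) by omega]
                exact h4.symm
              | (i' + 1) =>
                simp only [List.getElem?_cons_succ]
                rw [show l.length - q - (t.length + 1) + (i' + 1)
                    = l.length - q - t.length + i' by omega]
                exact h2 i' (by omega)
          · rw [dif_neg (fun h => h4 h.2), smul_zero, dif_pos (by omega), if_neg]
            intro hall
            apply h4
            have := hall 0 (by omega)
            simp only [List.getElem?_cons_zero] at this
            rw [show l.length - 1 - (q + t.length)
                = l.length - q - (t.length + 1) + 0 by omega]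
            exact this.symm
        · rw [dif_neg (fun h => h3 h.1), smul_zero, dif_neg (by omega)]
      · rw [if_neg h2, map_zero]
        by_cases h3 : q + (t.length + 1) ≤ l.length
        · rw [dif_pos h3, if_neg]
          intro hall
          apply h2
          intro i hi
          have := hall (i + 1) (by omega)
          simp only [List.getElem?_cons_succ] at this
          rw [show l.length - q - t.length + i
              = l.length - q - (t.length + 1) + (i + 1) by omega]
          exact this
        · rw [dif_neg h3]
    · rw [dif_neg h1, map_zero, dif_neg (by omega)]

lemma norm_Z_le (j : Fin d) : ‖Z l j‖ ≤ l.length * eps l := by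
  classical
  refine (norm_sum_le _ _).trans ?_
  have hb : ∀ k : Fin l.length,
      ‖(if l[l.length - 1 - (k : ℕ)]? = some j then
        (eps l : ℂ) • ((innerSL ℂ (E l k.castSucc)).smulRight (E l k.succ)) else 0)‖
        ≤ eps l := by
    intro k
    split
    · refine (norm_smul_le ((eps l : ℝ) : ℂ) (((innerSL ℂ (E l k.castSucc)).smulRight (E l k.succ)))).trans ?_
      rw [Complex.norm_real, Real.norm_of_nonneg (eps_nonneg l),
        norm_smulRight_apply, innerSL_apply_norm]
      have h1 : ‖E l k.castSucc‖ = 1 := by simp [E]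
      have h2 : ‖E l k.succ‖ = 1 := by simp [E]
      rw [h1, h2, mul_one, mul_one]
    · simpa using eps_nonneg l
  refine (Finset.sum_le_sum fun k _ => hb k).trans ?_
  simp [Finset.sum_const, Finset.card_univ, nsmul_eq_mul]

end S8

/-- Words in the letters `{1,…,d}`. -/
abbrev Word (d : ℕ) := FreeMonoid (Fin d)

/-- For a word `β = i₁⋯i_k` and operators `Z_1,…,Z_d` on `ℂⁿ`,
`Z^β := Z_{i₁}⋯Z_{i_k}` (with `Z^∅ = I`). -/
def Zw {d n : ℕ} (Z : Fin d → (EuclideanSpace ℂ (Fin n) →L[ℂ] EuclideanSpace ℂ (Fin n)))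
    (β : Word d) : EuclideanSpace ℂ (Fin n) →L[ℂ] EuclideanSpace ℂ (Fin n) :=
  ((FreeMonoid.toList β).map Z).prod

open ContinuousLinearMap in
/-- for any word `α ∈ F_d` of length `m`, there exist a jointly nilpotent
strict row contraction `Z = (Z_1,…,Z_d)` of operators on `ℂⁿ` with `n = m + 1`, and
vectors `y, v ∈ ℂⁿ`, such that `⟨y, Z^β v⟩ = δ_{β,α}` for every word `β`. -/
theorem statement_8 {d : ℕ} (hd : 1 ≤ d) (α : Word d) :
    ∃ (Z : Fin d → (EuclideanSpace ℂ (Fin ((FreeMonoid.toList α).length + 1)) →L[ℂ]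
        EuclideanSpace ℂ (Fin ((FreeMonoid.toList α).length + 1))))
      (y v : EuclideanSpace ℂ (Fin ((FreeMonoid.toList α).length + 1))),
      ‖∑ j, Z j * adjoint (Z j)‖ < 1 ∧
      (∀ β : Word d, (FreeMonoid.toList β).length > (FreeMonoid.toList α).length →
        Zw Z β = 0) ∧
      (∀ β : Word d, (inner ℂ y (Zw Z β v) : ℂ) = if β = α then 1 else 0) := by

  classical
  set l : List (Fin d) := FreeMonoid.toList α with hl
  have hll : l.length = (FreeMonoid.toList α).length := by rw [hl]
  have hD0 : 0 < d * (l.length + 1) := Nat.mul_pos hd (Nat.succ_pos _)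
  have hDC : ((d * (l.length + 1) : ℕ) : ℂ) ≠ 0 := Nat.cast_ne_zero.mpr hD0.ne'
  refine ⟨S8.Z l,
    (((d * (l.length + 1) : ℕ) : ℂ) ^ l.length) •
      S8.E l ⟨l.length, Nat.lt_succ_self _⟩,
    S8.E l ⟨0, Nat.succ_pos _⟩, ?_, ?_, ?_⟩
  · -- strict row contraction
    have hZ : ∀ j, ‖S8.Z l j‖ ≤ l.length * S8.eps l := S8.norm_Z_le l
    have h1 : ‖∑ j, S8.Z l j * adjoint (S8.Z l j)‖
        ≤ ∑ _j : Fin d, (l.length * S8.eps l) * (l.length * S8.eps l) := by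
      refine (norm_sum_le _ _).trans (Finset.sum_le_sum fun j _ => ?_)
      refine (norm_mul_le _ _).trans ?_
      have hadj : ‖adjoint (S8.Z l j)‖ = ‖S8.Z l j‖ :=
        ContinuousLinearMap.adjoint.norm_map (S8.Z l j)
      rw [hadj]
      exact mul_le_mul (hZ j) (hZ j) (norm_nonneg _)
        (mul_nonneg (Nat.cast_nonneg _) (S8.eps_nonneg l))
    refine h1.trans_lt ?_
    rw [Finset.sum_const, Finset.card_univ, Fintype.card_fin, nsmul_eq_mul]
    have hDpos : (0:ℝ) < ((d * (l.length + 1) : ℕ) : ℝ) := by exact_mod_cast hD0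
    rw [S8.eps, show (d:ℝ) * ((l.length * ((d * (l.length + 1) : ℕ) : ℝ)⁻¹) *
        (l.length * ((d * (l.length + 1) : ℕ) : ℝ)⁻¹))
        = ((d:ℝ) * l.length * l.length) /
          (((d * (l.length + 1) : ℕ) : ℝ) * ((d * (l.length + 1) : ℕ) : ℝ)) by
      field_simp]
    rw [div_lt_one (by positivity)]
    have hd1 : (1:ℝ) ≤ (d:ℝ) := by exact_mod_cast hd
    have hm0 : (0:ℝ) ≤ (l.length : ℝ) := Nat.cast_nonneg _
    push_cast
    have hd0 : (0:ℝ) ≤ (d:ℝ) := by linarith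
    have hA : 0 ≤ ((d:ℝ) - 1) * (d:ℝ) * (((l.length:ℝ) + 1) * ((l.length:ℝ) + 1)) :=
      mul_nonneg (mul_nonneg (sub_nonneg.mpr hd1) hd0)
        (mul_nonneg (by linarith) (by linarith))
    have hB : (1:ℝ) ≤ (d:ℝ) * (2 * (l.length:ℝ) + 1) := by nlinarith
    nlinarith [hA, hB]
  · -- joint nilpotency
    intro β hβ
    have key : ∀ i : Fin (l.length + 1),
        Zw (S8.Z l) β (EuclideanSpace.single i 1) = 0 := by
      intro i
      have h0 := S8.prod_single l (FreeMonoid.toList β) i.1 (Nat.lt_succ_iff.mp i.isLt)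
      rw [dif_neg (by omega)] at h0
      simpa [Zw, S8.E] using h0
    apply ContinuousLinearMap.coe_injective
    apply Module.Basis.ext (EuclideanSpace.basisFun (Fin (l.length + 1)) ℂ).toBasis
    intro i
    simpa [OrthonormalBasis.coe_toBasis, EuclideanSpace.basisFun_apply] using key i
  · -- inner products
    intro β
    have h0 := S8.prod_single l (FreeMonoid.toList β) 0 (Nat.zero_le _)
    have hZw : Zw (S8.Z l) β (S8.E l ⟨0, Nat.succ_pos _⟩)
        = _ := h0
    by_cases hβα : β = α
    · subst hβα
      rw [if_pos rfl]
      rw [dif_pos (by omega)] at hZw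
      rw [if_pos (fun i hi => by
        rw [show l.length - 0 - (FreeMonoid.toList β).length + i = i by omega, hl])] at hZw
      rw [hZw, inner_smul_left, inner_smul_right]
      have hin : (inner ℂ (S8.E l ⟨l.length, Nat.lt_succ_self _⟩)
          (S8.E l ⟨0 + (FreeMonoid.toList β).length, by omega⟩) : ℂ) = 1 := by
        simp only [S8.E, EuclideanSpace.inner_single_left, map_one, one_mul,
          EuclideanSpace.single_apply]
        rw [if_pos (by rw [Fin.mk.injEq]; omega)]
      rw [hin, mul_one]
      rw [map_pow, Complex.conj_natCast]
      have heps : ((S8.eps l : ℝ) : ℂ) = ((d * (l.length + 1) : ℕ) : ℂ)⁻¹ := by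
        rw [S8.eps]; push_cast; ring
      rw [heps, show (FreeMonoid.toList β).length = l.length from hll.symm,
        ← mul_pow, mul_inv_cancel₀ hDC, one_pow]
    · rw [if_neg hβα]
      by_cases hlen : 0 + (FreeMonoid.toList β).length ≤ l.length
      · rw [dif_pos hlen] at hZw
        by_cases hall : ∀ i < (FreeMonoid.toList β).length,
            (FreeMonoid.toList β)[i]? = l[l.length - 0 - (FreeMonoid.toList β).length + i]?
        · rw [if_pos hall] at hZw
          have hne : (FreeMonoid.toList β).length ≠ l.length := by
            intro he
            apply hβα
            have hbl : FreeMonoid.toList β = l := by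
              apply List.ext_getElem?
              intro i
              by_cases hi : i < l.length
              · rw [hall i (by omega),
                  show l.length - 0 - (FreeMonoid.toList β).length + i = i by omega]
              · rw [List.getElem?_eq_none (by omega), List.getElem?_eq_none (by omega)]
            exact FreeMonoid.toList.injective (hbl.trans hl)
          rw [hZw, inner_smul_left, inner_smul_right]
          have hin : (inner ℂ (S8.E l ⟨l.length, Nat.lt_succ_self _⟩)
              (S8.E l ⟨0 + (FreeMonoid.toList β).length, by omega⟩) : ℂ) = 0 := by
            simp only [S8.E, EuclideanSpace.inner_single_left, map_one, one_mul,
              EuclideanSpace.single_apply]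
            rw [if_neg (by rw [Fin.mk.injEq]; omega)]
          rw [hin, mul_zero, mul_zero]
        · rw [if_neg hall] at hZw
          rw [hZw, inner_zero_right]
      · rw [dif_neg hlen] at hZw
        rw [hZw, inner_zero_right]


end
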